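/- Let N be a tree with maximum degree Δ, and let {F_f(G), ⊕} be an every-zero graphic group with |F_f(G)| ≥ Δ + 2. Then N admits a proper total gg-coloring θ such that for every edge uv, the color multisets C′_θ(u) = {θ(u)} ∪ {θ(ux) : x ∈ N(u)} and C′_θ(v) = {θ(v)} ∪ {θ(vy) : y ∈ N(v)} are distinct (adjacent total-distinguishing condition). -/

import Mathlib

set_option linter.unusedSectionVars false


open SimpleGraph

namespace TreeGGaux

variable {V : Type} [Fintype V] [LinearOrder V]
variable (N : SimpleGraph V) [DecidableRel N.Adj] (r : V)

/-- neighbors of `u` one level deeper than `u`. -/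
noncomputable def children (u : V) : Finset V :=
  Finset.univ.filter (fun w => N.Adj u w ∧ N.dist r w = N.dist r u + 1)

lemma mem_children {u w : V} :
    w ∈ children N r u ↔ N.Adj u w ∧ N.dist r w = N.dist r u + 1 := by
  simp [children]

noncomputable def parent (v : V) : V :=
  if h : ∃ u, N.Adj v u ∧ N.dist r u + 1 = N.dist r v then h.choose else v

def rankIn (S : Finset V) (v : V) : ℕ := (S.sort (· ≤ ·)).idxOf v

def skip (s i : ℕ) : ℕ := if i < s then i else i + 1

lemma skip_ne (s i : ℕ) : skip s i ≠ s := by unfold skip; split <;> omega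

lemma skip_le (s i : ℕ) : skip s i ≤ i + 1 := by unfold skip; split <;> omega

lemma skip_inj {s i j : ℕ} (h : skip s i = skip s j) : i = j := by
  unfold skip at h; split at h <;> split at h <;> omega

lemma rankIn_lt {S : Finset V} {v : V} (hv : v ∈ S) : rankIn S v < S.card := by
  rw [rankIn, ← Finset.length_sort (α := V) (· ≤ ·)]
  exact List.idxOf_lt_length_iff.mpr ((Finset.mem_sort _).mpr hv)

lemma rankIn_inj {S : Finset V} {v w : V} (hv : v ∈ S) (hw : w ∈ S)
    (h : rankIn S v = rankIn S w) : v = w :=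
  (List.idxOf_inj (y := w) ((Finset.mem_sort _).mpr hv)).mp h

lemma exists_parent (hc : N.Connected) {v : V} (hv : N.dist r v ≠ 0) :
    ∃ u, N.Adj v u ∧ N.dist r u + 1 = N.dist r v := by
  obtain ⟨p, hpl⟩ := hc.exists_walk_length_eq_dist v r
  rw [SimpleGraph.dist_comm (u := v) (v := r)] at hpl
  cases p with
  | nil => rw [Walk.length_nil] at hpl; omega
  | @cons _ u _ h q =>
    refine ⟨u, h, ?_⟩
    have h1 : N.dist u r ≤ q.length := SimpleGraph.dist_le q
    have h2 : N.dist r v ≤ N.dist r u + N.dist u v := hc.dist_triangle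
    have h3 : N.dist u v = 1 := SimpleGraph.dist_eq_one_iff_adj.mpr h.symm
    rw [Walk.length_cons] at hpl
    rw [SimpleGraph.dist_comm (u := u) (v := r)] at h1
    omega

lemma parent_spec (hc : N.Connected) {v : V} (hv : N.dist r v ≠ 0) :
    N.Adj v (parent N r v) ∧ N.dist r (parent N r v) + 1 = N.dist r v := by
  have h := exists_parent N r hc hv
  rw [parent, dif_pos h]
  exact h.choose_spec

lemma concat_isPath {G : SimpleGraph V} {u v w : V} {p : G.Walk u v} (hp : p.IsPath)
    (h : G.Adj v w) (hw : w ∉ p.support) : (p.concat h).IsPath := by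
  rw [← Walk.isPath_reverse_iff, Walk.reverse_concat]
  rw [Walk.cons_isPath_iff]
  exact ⟨hp.reverse, by simpa using hw⟩

lemma not_mem_support (hN : N.IsTree) {u v : V} {p : N.Walk r u} (hp : p.IsPath)
    (hlen : p.length + 1 ≤ N.dist r v) : v ∉ p.support := by
  intro hvs
  obtain ⟨pv, hpv, hpvl⟩ := hN.isConnected.exists_path_of_dist r v
  have ht : (p.takeUntil v hvs).IsPath := hp.takeUntil hvs
  have := (hN.existsUnique_path r v).unique ht hpv
  have hl := congrArg Walk.length this
  have hle := Walk.length_takeUntil_le p hvs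
  omega

lemma adj_level (hN : N.IsTree) {u v : V} (h : N.Adj u v) :
    N.dist r v = N.dist r u + 1 ∨ N.dist r u = N.dist r v + 1 := by
  have hc := hN.isConnected
  have h1 : N.dist u v = 1 := SimpleGraph.dist_eq_one_iff_adj.mpr h
  have t1 : N.dist r v ≤ N.dist r u + N.dist u v := hc.dist_triangle
  have t2 : N.dist r u ≤ N.dist r v + N.dist v u := hc.dist_triangle
  have h1' : N.dist v u = 1 := SimpleGraph.dist_eq_one_iff_adj.mpr h.symm
  have hne : N.dist r u ≠ N.dist r v := by
    intro he
    obtain ⟨pu, hpu, hpul⟩ := hc.exists_path_of_dist r u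
    obtain ⟨pv, hpv, hpvl⟩ := hc.exists_path_of_dist r v
    have hvns : v ∉ pu.support := by
      intro hvs
      have ht : (pu.takeUntil v hvs).IsPath := hpu.takeUntil hvs
      have hteq := (hN.existsUnique_path r v).unique ht hpv
      have hl := congrArg Walk.length hteq
      have hsp := Walk.take_spec pu hvs
      have hl2 := congrArg Walk.length hsp
      rw [Walk.length_append] at hl2
      have h0 : (pu.dropUntil v hvs).length = 0 := by omega
      exact h.ne' (Walk.eq_of_length_eq_zero h0)
    have hP : (pu.concat h).IsPath := concat_isPath hpu h hvns
    have := (hN.existsUnique_path r v).unique hP hpv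
    have hl := congrArg Walk.length this
    rw [Walk.length_concat] at hl
    omega
  omega

lemma parent_unique (hN : N.IsTree) {v u u' : V} (h : N.Adj u v) (h' : N.Adj u' v)
    (hd : N.dist r u + 1 = N.dist r v) (hd' : N.dist r u' + 1 = N.dist r v) : u = u' := by
  have hc := hN.isConnected
  obtain ⟨pu, hpu, hpul⟩ := hc.exists_path_of_dist r u
  obtain ⟨pu', hpu', hpul'⟩ := hc.exists_path_of_dist r u'
  have hP : (pu.concat h).IsPath :=
    concat_isPath hpu h (not_mem_support N r hN hpu (by omega))
  have hP' : (pu'.concat h').IsPath :=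
    concat_isPath hpu' h' (not_mem_support N r hN hpu' (by omega))
  have := (hN.existsUnique_path r v).unique hP hP'
  exact (Walk.concat_inj this).1

noncomputable def slotAux : ℕ → V → ℕ
  | 0, _ => 0
  | (n+1), v =>
    if N.dist r v = 0 then 0
    else if N.dist r (parent N r v) = 0 then rankIn (children N r (parent N r v)) v
    else skip (slotAux n (parent N r v)) (rankIn (children N r (parent N r v)) v)

noncomputable def slot (v : V) : ℕ := slotAux N r (N.dist r v) v

lemma slot_eq (hc : N.Connected) {v : V} (hv : N.dist r v ≠ 0) :
    slot N r v = if N.dist r (parent N r v) = 0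
      then rankIn (children N r (parent N r v)) v
      else skip (slot N r (parent N r v)) (rankIn (children N r (parent N r v)) v) := by
  obtain ⟨m, hm⟩ : ∃ m, N.dist r v = m + 1 := ⟨N.dist r v - 1, by omega⟩
  have hp := (parent_spec N r hc hv).2
  have hmu : m = N.dist r (parent N r v) := by omega
  rw [slot, hm, slotAux, if_neg (by omega), hmu]
  rfl

lemma mem_children_of_parent (hc : N.Connected) {v : V} (hv : N.dist r v ≠ 0) :
    v ∈ children N r (parent N r v) := by
  obtain ⟨ha, hd⟩ := parent_spec N r hc hv
  exact (mem_children N r).mpr ⟨ha.symm, by omega⟩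

lemma children_subset (u : V) : children N r u ⊆ N.neighborFinset u := fun w hw => by
  rw [SimpleGraph.mem_neighborFinset]; exact ((mem_children N r).mp hw).1

lemma children_card_le {u : V} (hc : N.Connected) (hu : N.dist r u ≠ 0) :
    (children N r u).card + 1 ≤ N.degree u := by
  obtain ⟨ha, hd⟩ := parent_spec N r hc hu
  have hpnot : parent N r u ∉ children N r u := by
    intro hmem
    have := ((mem_children N r).mp hmem).2
    omega
  have hsub : children N r u ⊆ (N.neighborFinset u).erase (parent N r u) := fun w hw =>
    Finset.mem_erase.mpr ⟨fun he => hpnot (he ▸ hw), children_subset N r u hw⟩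
  have h1 := Finset.card_le_card hsub
  rw [Finset.card_erase_of_mem ((SimpleGraph.mem_neighborFinset N u (parent N r u)).mpr ha)] at h1
  have h2 : 0 < N.degree u := by
    rw [SimpleGraph.degree_pos_iff_exists_adj]; exact ⟨_, ha⟩
  rw [SimpleGraph.degree] at *
  omega

lemma slot_lt (hc : N.Connected) {v : V} (hv : N.dist r v ≠ 0) :
    slot N r v < N.maxDegree := by
  have hmem := mem_children_of_parent N r hc hv
  have hrank := rankIn_lt hmem
  have hdeg : (children N r (parent N r v)).card ≤ N.degree (parent N r v) := by
    have := Finset.card_le_card (children_subset N r (parent N r v))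
    rwa [SimpleGraph.degree]
  have hmd := N.degree_le_maxDegree (parent N r v)
  rw [slot_eq N r hc hv]
  by_cases h0 : N.dist r (parent N r v) = 0
  · rw [if_pos h0]; omega
  · rw [if_neg h0]
    have := skip_le (slot N r (parent N r v)) (rankIn (children N r (parent N r v)) v)
    have := children_card_le N r hc h0
    omega

lemma parent_eq (hN : N.IsTree) {u v : V} (h : N.Adj u v)
    (hd : N.dist r v = N.dist r u + 1) : parent N r v = u := by
  obtain ⟨ha, hdp⟩ := parent_spec N r hN.isConnected (v := v) (by omega)
  exact parent_unique N r hN ha.symm h hdp (by omega)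

lemma slot_inj_children (hN : N.IsTree) {u v w : V} (hv : v ∈ children N r u)
    (hw : w ∈ children N r u) (hne : v ≠ w) : slot N r v ≠ slot N r w := by
  have hc := hN.isConnected
  obtain ⟨hav, hdv⟩ := (mem_children N r).mp hv
  obtain ⟨haw, hdw⟩ := (mem_children N r).mp hw
  have hpv : parent N r v = u := parent_eq N r hN hav hdv
  have hpw : parent N r w = u := parent_eq N r hN haw hdw
  rw [slot_eq N r hc (v := v) (by omega), slot_eq N r hc (v := w) (by omega), hpv, hpw]
  by_cases h0 : N.dist r u = 0
  · rw [if_pos h0, if_pos h0]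
    exact fun h => hne (rankIn_inj hv hw h)
  · rw [if_neg h0, if_neg h0]
    exact fun h => hne (rankIn_inj hv hw (skip_inj h))

lemma slot_ne_parent (hN : N.IsTree) {u v : V} (h : N.Adj u v)
    (hd : N.dist r v = N.dist r u + 1) (hu0 : N.dist r u ≠ 0) :
    slot N r v ≠ slot N r u := by
  have hpv : parent N r v = u := parent_eq N r hN h hd
  rw [slot_eq N r hN.isConnected (v := v) (by omega), hpv, if_neg hu0]
  exact skip_ne _ _

end TreeGGaux



open SimpleGraph TreeGGaux in
/-- if `N` is a tree and the every-zero graphic group has at least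
`Δ(N) + 2` elements (indices in `ZMod q`, operation `a ⊕_k b = a + b − k`), then `N`
admits a proper total gg-coloring which is adjacent total-distinguishing: for every edge
`uv` the sets `C′(u) = {θ(u)} ∪ {θ(ux) : x ∈ N(u)}` and `C′(v)` differ. -/
theorem tree_adjacent_total_distinguishing_gg_coloring {V : Type} [Fintype V]
    (N : SimpleGraph V) [DecidableRel N.Adj] (hN : N.IsTree)
    (q : ℕ) (hq : N.maxDegree + 2 ≤ q) :
    ∃ (θv : V → ZMod q) (θe : Sym2 V → ZMod q),
      (∀ u v, N.Adj u v → θv u ≠ θv v) ∧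
      (∀ u v w, N.Adj u v → N.Adj u w → v ≠ w → θe s(u, v) ≠ θe s(u, w)) ∧
      (∀ u v, N.Adj u v → ∃ k : ZMod q, θe s(u, v) = θv u + θv v - k) ∧
      (∀ u v, N.Adj u v →
        insert (θv u) {c : ZMod q | ∃ y, N.Adj u y ∧ c = θe s(u, y)} ≠
        insert (θv v) {c : ZMod q | ∃ y, N.Adj v y ∧ c = θe s(v, y)}) := by
  classical
  by_cases hE : ∃ u v, N.Adj u v
  case neg =>
    push_neg at hE
    exact ⟨0, 0, fun u v h => absurd h (hE u v), fun u v w h _ _ => absurd h (hE u v),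
      fun u v h => absurd h (hE u v), fun u v h => absurd h (hE u v)⟩
  obtain ⟨u0, v0, h0⟩ := hE
  have hc := hN.isConnected
  have hΔ : 1 ≤ N.maxDegree := by
    have h1 : 0 < N.degree u0 := by
      rw [SimpleGraph.degree_pos_iff_exists_adj]; exact ⟨v0, h0⟩
    have := N.degree_le_maxDegree u0
    omega
  have hq3 : 3 ≤ q := by omega
  haveI : NeZero q := ⟨by omega⟩
  letI : LinearOrder V := LinearOrder.lift' (Fintype.equivFin V) (Fintype.equivFin V).injective
  set r : V := u0 with hr
  set Δ := N.maxDegree with hΔdef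
  -- cast injectivity helper
  have cast_ne : ∀ a b : ℕ, a < q → b < q → a ≠ b → (a : ZMod q) ≠ (b : ZMod q) := by
    intro a b ha hb hab hcast
    have := congrArg ZMod.val hcast
    rw [ZMod.val_natCast_of_lt ha, ZMod.val_natCast_of_lt hb] at this
    exact hab this
  set sl : V → ℕ := slot N r with hsl
  set fE : V → V → ZMod q := fun a b =>
    ((2 + (if N.dist r a < N.dist r b then sl b
      else if N.dist r b < N.dist r a then sl a
      else min (sl a) (sl b)) : ℕ) : ZMod q) with hfE
  have hsymm : ∀ a b, fE a b = fE b a := by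
    intro a b
    rcases lt_trichotomy (N.dist r a) (N.dist r b) with h | h | h
    · simp only [hfE, if_pos h, if_neg (lt_asymm h)]
    · simp only [hfE, if_neg h.not_lt, if_neg h.symm.not_lt, min_comm]
    · simp only [hfE, if_pos h, if_neg (lt_asymm h)]
  set θe : Sym2 V → ZMod q := Sym2.lift ⟨fE, hsymm⟩ with hθe
  set θv : V → ZMod q := fun v => ((N.dist r v % 2 : ℕ) : ZMod q) with hθv
  have hmk : ∀ a b, θe s(a, b) = fE a b := fun a b => rfl
  have hL1 : ∀ {u v : V}, N.Adj u v →
      N.dist r v = N.dist r u + 1 ∨ N.dist r u = N.dist r v + 1 :=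
    fun h => adj_level N r hN h
  have hlt : ∀ {v : V}, N.dist r v ≠ 0 → sl v < Δ := fun hv => slot_lt N r hc hv
  -- child-edge value
  have hE2 : ∀ {a b : V}, N.dist r b = N.dist r a + 1 →
      θe s(a, b) = ((2 + sl b : ℕ) : ZMod q) := by
    intro a b hd
    rw [hmk, hfE]
    simp only [if_pos (show N.dist r a < N.dist r b by omega)]
  have hE1 : ∀ {a b : V}, N.Adj a b → ∃ c, N.dist r c ≠ 0 ∧
      θe s(a, b) = ((2 + sl c : ℕ) : ZMod q) := by
    intro a b hab
    rcases hL1 hab with hd | hd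
    · exact ⟨b, by omega, hE2 hd⟩
    · refine ⟨a, by omega, ?_⟩
      rw [Sym2.eq_swap]
      exact hE2 hd
  refine ⟨θv, θe, ?_, ?_, ?_, ?_⟩
  · -- proper vertex coloring
    intro u v h
    rcases hL1 h with hd | hd <;>
      exact cast_ne _ _ (by omega) (by omega) (by omega)
  · -- proper edge coloring
    intro u v w huv huw hvw
    rcases hL1 huv with hdv | hdv <;> rcases hL1 huw with hdw | hdw
    · -- both children
      rw [hE2 hdv, hE2 hdw]
      have hv : v ∈ children N r u := (mem_children N r).mpr ⟨huv, hdv⟩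
      have hw : w ∈ children N r u := (mem_children N r).mpr ⟨huw, hdw⟩
      have := slot_inj_children N r hN hv hw hvw
      rw [show slot N r = sl from rfl] at this
      exact cast_ne _ _ (by have := hlt (v := v) (by omega); omega)
        (by have := hlt (v := w) (by omega); omega) (by omega)
    · -- v child, w parent
      rw [hE2 hdv, Sym2.eq_swap, hE2 hdw]
      have h1 : sl v ≠ sl u := slot_ne_parent N r hN huv hdv (by omega)
      exact cast_ne _ _ (by have := hlt (v := v) (by omega); omega)
        (by have := hlt (v := u) (by omega); omega) (by omega)
    · -- v parent, w child
      rw [Sym2.eq_swap, hE2 hdv, hE2 hdw]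
      have h1 : sl w ≠ sl u := slot_ne_parent N r hN huw hdw (by omega)
      exact cast_ne _ _ (by have := hlt (v := u) (by omega); omega)
        (by have := hlt (v := w) (by omega); omega) (by omega)
    · -- both parents: impossible
      exact absurd (parent_unique N r hN huv.symm huw.symm (by omega) (by omega)) hvw
  · -- gg condition (trivial)
    intro u v h
    exact ⟨θv u + θv v - θe s(u, v), by ring⟩
  · -- adjacent total distinguishing
    have key : ∀ a b, N.Adj a b → N.dist r b = N.dist r a + 1 →
        insert (θv a) {c : ZMod q | ∃ y, N.Adj a y ∧ c = θe s(a, y)} ≠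
        insert (θv b) {c : ZMod q | ∃ y, N.Adj b y ∧ c = θe s(b, y)} := by
      intro a b hab hd heq
      have hmem : θv a ∈ insert (θv b) {c : ZMod q | ∃ y, N.Adj b y ∧ c = θe s(b, y)} := by
        rw [← heq]; exact Set.mem_insert _ _
      rcases Set.mem_insert_iff.mp hmem with hv | ⟨y, hby, hval⟩
      · exact cast_ne _ _ (by omega) (by omega) (by omega) hv
      · obtain ⟨c, hc0, hcv⟩ := hE1 hby
        rw [hcv] at hval
        have := hlt hc0
        exact cast_ne _ _ (by omega) (by omega) (by omega) hval
    intro u v h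
    rcases hL1 h with hd | hd
    · exact key u v h hd
    · exact (key v u h.symm hd).symm
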